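/- Fix β > 0 and c > 0 with β⁴ > c, set γ := √(β² − √c), ψ(x) := β² − x², and let a ∈ (γ, β) be the unique number with ∫₀^a dξ/ψ(ξ)² = a/c. Define u(x) := 2 ∫ₓ^a ( ∫_y^a (ψ(ξ)² − c)/ψ(ξ)² dξ ) dy for x ∈ [0, a]. Then: (i) u satisfies (ψ(x)²/2) u''(x) + c − ψ(x)² = 0 for x ∈ (0, a); (ii) u(a) = 0 and u'(a) = 0 (smooth fit); (iii) u'(0) = 0; (iv) u(x) < 0 for all x ∈ [0, a); and (v) c − ψ(x)² > 0 for all x ∈ (a, β). -/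

import Mathlib

open Real Set Filter MeasureTheory intervalIntegral

noncomputable section

/-- `ψ(x) = β² - x²`, the dispersion function for the symmetric Bernoulli prior. -/
def psiB (β x : ℝ) : ℝ := β ^ 2 - x ^ 2

/-- The candidate value function
`u(x) = 2 ∫ₓᵃ ( ∫_yᵃ (ψ(ξ)² - c)/ψ(ξ)² dξ ) dy` of the free-boundary problem. -/
def uFun (β c a x : ℝ) : ℝ :=
  2 * ∫ y in x..a, (∫ ξ in y..a, (psiB β ξ ^ 2 - c) / psiB β ξ ^ 2)

/-- auxiliary integrand -/
def fB (β c ξ : ℝ) : ℝ := (psiB β ξ ^ 2 - c) / psiB β ξ ^ 2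

/-- auxiliary inner integral -/
def gB (β c a y : ℝ) : ℝ := ∫ ξ in y..a, fB β c ξ

lemma uFun_eq_gB (β c a : ℝ) : uFun β c a = fun x => 2 * ∫ y in x..a, gB β c a y := rfl

/-- Subsection 4.2: with `β⁴ > c > 0`, `γ = √(β² - √c)` and
`a ∈ (γ, β)` the unique point with `∫₀ᵃ ψ⁻² = a/c`, the function `u` satisfies:
(i) `(ψ²/2) u'' + c - ψ² = 0` on `(0,a)`; (ii) `u(a) = 0` and `u'(a) = 0` (smooth fit);
(iii) `u'(0) = 0`; (iv) `u < 0` on `[0,a)`; and (v) `c - ψ² > 0` on `(a,β)`. -/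
theorem bernoulli_free_boundary_solution
    (β c a : ℝ) (hβ : 0 < β) (hc : 0 < c) (hcb : c < β ^ 4)
    (ha : a ∈ Set.Ioo (Real.sqrt (β ^ 2 - Real.sqrt c)) β)
    (haeq : (∫ ξ in (0 : ℝ)..a, 1 / psiB β ξ ^ 2) = a / c) :
    (∀ x ∈ Set.Ioo (0 : ℝ) a,
        (psiB β x ^ 2 / 2) * deriv (deriv (uFun β c a)) x + c - psiB β x ^ 2 = 0) ∧
      uFun β c a a = 0 ∧ deriv (uFun β c a) a = 0 ∧
      deriv (uFun β c a) 0 = 0 ∧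
      (∀ x ∈ Set.Ico (0 : ℝ) a, uFun β c a x < 0) ∧
      ∀ x ∈ Set.Ioo a β, 0 < c - psiB β x ^ 2 := by
  obtain ⟨hγa, haβ⟩ := ha
  set γ := Real.sqrt (β ^ 2 - Real.sqrt c) with hγdef
  have hsc : Real.sqrt c ^ 2 = c := Real.sq_sqrt hc.le
  have hscpos : 0 < Real.sqrt c := Real.sqrt_pos.mpr hc
  have hscβ : Real.sqrt c < β ^ 2 := (Real.sqrt_lt' (by positivity)).mpr (by nlinarith)
  have hγ2 : γ ^ 2 = β ^ 2 - Real.sqrt c := Real.sq_sqrt (by linarith)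
  have hγpos : 0 < γ := Real.sqrt_pos.mpr (by linarith)
  have ha0 : 0 < a := hγpos.trans hγa
  have haI : a ∈ Set.Ioo (-β) β := ⟨by linarith, haβ⟩
  have h0I : (0 : ℝ) ∈ Set.Ioo (-β) β := ⟨by linarith, hβ⟩
  have hψpos : ∀ x ∈ Set.Ioo (-β) β, 0 < psiB β x := by
    intro x hx
    have h1 := hx.1; have h2 := hx.2
    unfold psiB; nlinarith
  have hψcont : Continuous (psiB β) := by unfold psiB; fun_prop
  have hfca : ∀ x, psiB β x ≠ 0 → ContinuousAt (fB β c) x := by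
    intro x hx
    exact ContinuousAt.div (((hψcont.pow 2).sub continuous_const).continuousAt)
      ((hψcont.pow 2).continuousAt) (pow_ne_zero 2 hx)
  have hfcOn : ContinuousOn (fB β c) (Set.Ioo (-β) β) :=
    fun x hx => (hfca x (hψpos x hx).ne').continuousWithinAt
  have hsub : ∀ x ∈ Set.Ioo (-β) β, ∀ y ∈ Set.Ioo (-β) β,
      Set.uIcc x y ⊆ Set.Ioo (-β) β :=
    fun x hx y hy => Set.ordConnected_Ioo.uIcc_subset hx hy
  have hfint : ∀ x ∈ Set.Ioo (-β) β, ∀ y ∈ Set.Ioo (-β) β,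
      IntervalIntegrable (fB β c) volume x y :=
    fun x hx y hy => (hfcOn.mono (hsub x hx y hy)).intervalIntegrable
  have hGderiv : ∀ x ∈ Set.Ioo (-β) β, HasDerivAt (gB β c a) (-fB β c x) x := by
    intro x hx
    exact intervalIntegral.integral_hasDerivAt_left (hfint x hx a haI)
      (hfcOn.stronglyMeasurableAtFilter isOpen_Ioo x hx) (hfca x (hψpos x hx).ne')
  have hGcont : ContinuousOn (gB β c a) (Set.Ioo (-β) β) :=
    fun x hx => ((hGderiv x hx).continuousAt).continuousWithinAt
  have hGint : ∀ x ∈ Set.Ioo (-β) β, IntervalIntegrable (gB β c a) volume x a :=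
    fun x hx => (hGcont.mono (hsub x hx a haI)).intervalIntegrable
  have hUderiv : ∀ x ∈ Set.Ioo (-β) β, HasDerivAt (uFun β c a) (-2 * gB β c a x) x := by
    intro x hx
    have h := (intervalIntegral.integral_hasDerivAt_left (hGint x hx)
      (hGcont.stronglyMeasurableAtFilter isOpen_Ioo x hx)
      ((hGderiv x hx).continuousAt)).const_mul (2 : ℝ)
    rw [uFun_eq_gB]
    rw [show (-2 * gB β c a x) = 2 * -gB β c a x by ring]
    exact h
  have hGa : gB β c a a = 0 := intervalIntegral.integral_same
  have hG0 : gB β c a 0 = 0 := by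
    have h1 : Set.EqOn (fB β c) (fun ξ => 1 - c * (1 / psiB β ξ ^ 2)) (Set.uIcc 0 a) := by
      intro ξ hξ
      have hξ' : ξ ∈ Set.Ioo (-β) β := hsub 0 h0I a haI hξ
      have hne := (hψpos ξ hξ').ne'
      unfold fB
      field_simp
    have hint2 : IntervalIntegrable (fun ξ => c * (1 / psiB β ξ ^ 2)) volume 0 a := by
      apply ContinuousOn.intervalIntegrable
      intro ξ hξ
      have hξ' : ξ ∈ Set.Ioo (-β) β := hsub 0 h0I a haI hξ
      have hne := (hψpos ξ hξ').ne'
      exact (continuousAt_const.mul (ContinuousAt.div continuousAt_const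
        ((hψcont.pow 2).continuousAt) (pow_ne_zero 2 hne))).continuousWithinAt
    have : gB β c a 0 = ∫ ξ in (0:ℝ)..a, (1 - c * (1 / psiB β ξ ^ 2)) :=
      intervalIntegral.integral_congr h1
    rw [this, intervalIntegral.integral_sub intervalIntegrable_const hint2,
      intervalIntegral.integral_const_mul, haeq]
    simp
    field_simp
    ring
  -- sign facts
  have hf_nonneg : ∀ ξ ∈ Set.Icc (0:ℝ) γ, 0 ≤ fB β c ξ := by
    intro ξ hξ
    obtain ⟨h1, h2⟩ := hξ
    have hξ2 : ξ ^ 2 ≤ γ ^ 2 := by nlinarith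
    have hψ : Real.sqrt c ≤ psiB β ξ := by unfold psiB; linarith
    have : c ≤ psiB β ξ ^ 2 := by nlinarith
    exact div_nonneg (by linarith) (by positivity)
  have hf_nonpos : ∀ ξ ∈ Set.Icc γ a, fB β c ξ ≤ 0 := by
    intro ξ hξ
    obtain ⟨h1, h2⟩ := hξ
    have hξ2 : γ ^ 2 ≤ ξ ^ 2 := by nlinarith
    have hψ : psiB β ξ ≤ Real.sqrt c := by unfold psiB; linarith
    have hψ0 : 0 < psiB β ξ := hψpos ξ ⟨by linarith, by linarith⟩
    have : psiB β ξ ^ 2 ≤ c := by nlinarith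
    exact div_nonpos_of_nonpos_of_nonneg (by linarith) (by positivity)
  have hfa : fB β c a < 0 := by
    have hξ2 : γ ^ 2 < a ^ 2 := by nlinarith
    have hψ : psiB β a < Real.sqrt c := by unfold psiB; linarith
    have hψ0 : 0 < psiB β a := hψpos a haI
    have : psiB β a ^ 2 < c := by nlinarith
    exact div_neg_of_neg_of_pos (by linarith) (by positivity)
  have hGneg : ∀ y, γ ≤ y → y < a → gB β c a y < 0 := by
    intro y h1 h2
    have h3 : (∫ ξ in y..a, fB β c ξ) < ∫ ξ in y..a, (0:ℝ) := by
      apply intervalIntegral.integral_lt_integral_of_continuousOn_of_le_of_exists_lt h2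
      · exact hfcOn.mono (fun t ht => ⟨by linarith [ht.1], lt_of_le_of_lt ht.2 haβ⟩)
      · exact continuousOn_const
      · intro t ht; exact hf_nonpos t ⟨le_trans h1 ht.1.le, ht.2⟩
      · exact ⟨a, ⟨by linarith, le_rfl⟩, by simpa using hfa⟩
    simpa [gB] using h3
  have hG_nonpos : ∀ y ∈ Set.Icc (0:ℝ) a, gB β c a y ≤ 0 := by
    intro y hy
    obtain ⟨hy0, hya⟩ := hy
    rcases le_or_gt y γ with h | h
    · have hyI : y ∈ Set.Ioo (-β) β := ⟨by linarith, by linarith⟩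
      have hadd : (∫ ξ in y..(0:ℝ), fB β c ξ) + (∫ ξ in (0:ℝ)..a, fB β c ξ)
          = ∫ ξ in y..a, fB β c ξ :=
        intervalIntegral.integral_add_adjacent_intervals (hfint y hyI 0 h0I)
          (hfint 0 h0I a haI)
      have hG0' : (∫ ξ in (0:ℝ)..a, fB β c ξ) = 0 := hG0
      have hGy : gB β c a y = - ∫ ξ in (0:ℝ)..y, fB β c ξ := by
        rw [show gB β c a y = ∫ ξ in y..a, fB β c ξ from rfl, ← hadd, hG0', add_zero,
          intervalIntegral.integral_symm]
      rw [hGy, neg_nonpos]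
      exact intervalIntegral.integral_nonneg hy0
        (fun t ht => hf_nonneg t ⟨ht.1, le_trans ht.2 h⟩)
    · rcases lt_or_eq_of_le hya with h2 | h2
      · exact (hGneg y h.le h2).le
      · rw [h2, hGa]
  have huneg : ∀ x ∈ Set.Ico (0:ℝ) a, uFun β c a x < 0 := by
    intro x hx
    obtain ⟨hx0, hxa⟩ := hx
    set m := max x γ with hm
    have hma : m < a := max_lt hxa hγa
    have hmm : m < (m + a) / 2 := by linarith
    have hy0a : (m + a) / 2 < a := by linarith
    have hneg : gB β c a ((m + a) / 2) < 0 :=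
      hGneg _ (le_trans (le_max_right x γ) hmm.le) hy0a
    have h3 : (∫ y in x..a, gB β c a y) < ∫ y in x..a, (0:ℝ) := by
      apply intervalIntegral.integral_lt_integral_of_continuousOn_of_le_of_exists_lt hxa
      · exact hGcont.mono (fun t ht => ⟨by linarith [ht.1], lt_of_le_of_lt ht.2 haβ⟩)
      · exact continuousOn_const
      · intro t ht; exact hG_nonpos t ⟨by linarith [ht.1], ht.2⟩
      · exact ⟨(m + a) / 2, ⟨le_trans (le_max_left x γ) hmm.le, hy0a.le⟩,
          by simpa using hneg⟩
    rw [uFun_eq_gB]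
    simp only []
    have : (∫ y in x..a, (0:ℝ)) = 0 := by simp
    nlinarith [h3]
  refine ⟨?_, ?_, ?_, ?_, huneg, ?_⟩
  · -- ODE
    intro x hx
    obtain ⟨hx0, hxa⟩ := hx
    have hxI : x ∈ Set.Ioo (-β) β := ⟨by linarith, by linarith⟩
    have hev : deriv (uFun β c a) =ᶠ[nhds x] (fun t => -2 * gB β c a t) :=
      Filter.eventuallyEq_of_mem (isOpen_Ioo.mem_nhds hxI)
        (fun t ht => (hUderiv t ht).deriv)
    have h2 : deriv (deriv (uFun β c a)) x = 2 * fB β c x := by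
      rw [hev.deriv_eq, ((hGderiv x hxI).const_mul (-2:ℝ)).deriv]
      ring
    rw [h2]
    have hne := (hψpos x hxI).ne'
    unfold fB
    field_simp
    ring
  · rw [uFun_eq_gB]; simp
  · rw [(hUderiv a haI).deriv, hGa]; ring
  · rw [(hUderiv 0 h0I).deriv, hG0]; ring
  · intro x hx
    obtain ⟨hax, hxβ⟩ := hx
    have hx0 : 0 < x := ha0.trans hax
    have h1 : γ ^ 2 < x ^ 2 := by nlinarith
    have h2 : psiB β x < Real.sqrt c := by unfold psiB; linarith
    have h3 : 0 < psiB β x := hψpos x ⟨by linarith, hxβ⟩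
    have h4 : psiB β x ^ 2 < Real.sqrt c ^ 2 := by
      exact pow_lt_pow_left₀ h2 h3.le (by norm_num)
    linarith [hsc, h4]
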